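/- arXiv:2001.08719 — 2 statements merged into one kernel-verified Lean document; each statement's English description precedes it below -/
import Mathlib

section
/- Let $\{\eta_k\}$ be i.i.d. Bernoulli($p$) random variables, $p \in (0,1]$, and $M_k = 2 + \sum_{l=1}^{k-1} \eta_l$. Then almost surely the series $\sum_{k=1}^{\infty} \left(\frac{1}{M_k + 1} - \frac{1}{pk}\right)$ converges absolutely. -/
open MeasureTheory ProbabilityTheory Filter Topology

lemma stmt_4_aux (p t : ℝ) (k : ℕ) (hp : 0 < p) (hp1 : p ≤ 1) (hk1 : 1 ≤ k)
    (hTk : p * k / 2 ≤ t) :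
    |1 / ((2 + t) + 1) - 1 / (p * ((k:ℝ) + 1))| ≤
      (1/p^2) * ((t - p * k)^2 * (((k:ℝ)^2) * Real.sqrt k)⁻¹ + ((k:ℝ) * Real.sqrt k)⁻¹)
        + (6/p^2) * (((k:ℝ)^2)⁻¹) := by
  set K : ℝ := (k:ℝ) with hKdef
  have hK1 : (1:ℝ) ≤ K := by rw [hKdef]; exact_mod_cast hk1
  have hK0 : (0:ℝ) < K := by linarith
  set s := Real.sqrt K with hsdef
  have hs0 : 0 < s := Real.sqrt_pos.mpr hK0
  have hsK : s^2 = K := Real.sq_sqrt hK0.le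
  set d := t - p * K with hddef
  have hpK : (0:ℝ) < p * K := mul_pos hp hK0
  have ht0 : 0 < t := lt_of_lt_of_le (by linarith) hTk
  have hx0 : (0:ℝ) < (2 + t) + 1 := by linarith
  have hy0 : (0:ℝ) < p * (K + 1) := mul_pos hp (by linarith)
  have hxy : (1:ℝ)/((2+t)+1) - 1/(p*(K+1))
      = (p*(K+1) - ((2+t)+1)) / (((2+t)+1) * (p*(K+1))) := by
    field_simp
  have ha : |1 / ((2 + t) + 1) - 1 / (p * (K + 1))|
      = |p*(K+1) - ((2+t)+1)| / (((2+t)+1) * (p*(K+1))) := by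
    rw [hxy, abs_div, abs_of_pos (mul_pos hx0 hy0)]
  have hnum : |p*(K+1) - ((2+t)+1)| ≤ |d| + 3 := by
    rw [abs_le]
    constructor
    · linarith [le_abs_self d, neg_abs_le d]
    · linarith [le_abs_self d, neg_abs_le d]
  have hden : p^2 * K^2 / 2 ≤ ((2+t)+1) * (p*(K+1)) := by
    have h1 : p*K/2 ≤ (2+t)+1 := by linarith
    have h2 : p*K ≤ p*(K+1) := by
      have := mul_le_mul_of_nonneg_left (by linarith : K ≤ K+1) hp.le
      linarith
    calc p^2*K^2/2 = (p*K/2)*(p*K) := by ring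
      _ ≤ ((2+t)+1) * (p*(K+1)) := mul_le_mul h1 h2 (le_of_lt hpK) (le_of_lt hx0)
  have hden0 : (0:ℝ) < p^2*K^2/2 := by positivity
  have step1 : |1 / ((2 + t) + 1) - 1 / (p * (K + 1))| ≤ (|d| + 3) / (p^2 * K^2 / 2) := by
    rw [ha]
    exact div_le_div₀ (by positivity) hnum hden0 hden
  have key2 : 2 * |d| * s ≤ d^2 + K := by
    nlinarith [sq_nonneg (|d| - s), sq_abs d, hsK]
  have amgm : |d| / K^2 ≤ (d^2 / (K^2 * s) + 1/(K*s)) / 2 := by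
    have e : d^2/(K^2*s) + 1/(K*s) = (d^2 + K)/(K^2*s) := by field_simp
    rw [e, div_div, div_le_div_iff₀ (by positivity) (by positivity)]
    nlinarith [mul_le_mul_of_nonneg_right key2 (sq_nonneg K)]
  have final : (|d| + 3) / (p^2*K^2/2) ≤
      (1/p^2) * (d^2 * ((K^2*s))⁻¹ + (K*s)⁻¹) + (6/p^2) * (K^2)⁻¹ := by
    have expand : (|d|+3)/(p^2*K^2/2) = (2/p^2) * (|d|/K^2) + (6/p^2) * (K^2)⁻¹ := by
      field_simp
      ring
    rw [expand]
    have hstep : (2/p^2) * (|d|/K^2) ≤ (1/p^2) * (d^2*(K^2*s)⁻¹ + (K*s)⁻¹) := by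
      calc (2/p^2)*(|d|/K^2) ≤ (2/p^2)*((d^2/(K^2*s) + 1/(K*s))/2) :=
            mul_le_mul_of_nonneg_left amgm (by positivity)
        _ = (1/p^2)*(d^2*(K^2*s)⁻¹ + (K*s)⁻¹) := by
            rw [div_eq_mul_inv (d^2), one_div]; ring
    linarith
  exact le_trans step1 final

theorem stmt_4 {Ω : Type*} [MeasureSpace Ω] [IsProbabilityMeasure (ℙ : Measure Ω)]
    (p : ℝ) (hp : 0 < p) (hp1 : p ≤ 1)
    (η : ℕ → Ω → ℝ)
    (hmeas : ∀ k, Measurable (η k))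
    (hindep : iIndepFun η ℙ)
    (hrange : ∀ k ω, η k ω = 0 ∨ η k ω = 1)
    (hber : ∀ k, ℙ {ω | η k ω = 1} = ENNReal.ofReal p) :
    ∀ᵐ ω ∂ℙ, Summable (fun k : ℕ =>
      |1 / ((2 + ∑ l ∈ Finset.Icc 1 k, η l ω) + 1) - 1 / (p * (k + 1))|) := by
  classical
  set T : ℕ → Ω → ℝ := fun k ω => ∑ l ∈ Finset.Icc 1 k, η l ω with hTdef
  have hTmeas : ∀ k, Measurable (T k) := fun k =>
    Finset.measurable_sum _ (fun i _ => hmeas i)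
  -- identically distributed
  have hident : ∀ i, IdentDistrib (η i) (η 0) ℙ ℙ := by
    have h1meas : ∀ k, MeasurableSet {ω | η k ω = 1} := fun k => (hmeas k) measurableSet_eq
    have h0meas : ∀ k, MeasurableSet {ω | η k ω = 0} := fun k => (hmeas k) measurableSet_eq
    have law : ∀ (k : ℕ) (s : Set ℝ), ℙ (η k ⁻¹' s) = ℙ (η 0 ⁻¹' s) := by
      have key : ∀ (k : ℕ) (s : Set ℝ),
          (η k ⁻¹' s) = (if (1:ℝ) ∈ s then {ω | η k ω = 1} else ∅)
            ∪ (if (0:ℝ) ∈ s then {ω | η k ω = 0} else ∅) := by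
        intro k s
        by_cases h1 : (1:ℝ) ∈ s <;> by_cases hz : (0:ℝ) ∈ s <;>
          · ext ω; rcases hrange k ω with h | h <;>
              simp [Set.mem_preimage, h, h1, hz]
      have disj : ∀ (k : ℕ) (s : Set ℝ), Disjoint
          (if (1:ℝ) ∈ s then {ω | η k ω = 1} else ∅)
          (if (0:ℝ) ∈ s then {ω | η k ω = 0} else ∅) := by
        intro k s
        by_cases h1 : (1:ℝ) ∈ s <;> by_cases hz : (0:ℝ) ∈ s <;>
          simp only [h1, hz, if_true, if_false, Set.disjoint_empty, Set.empty_disjoint]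
        rw [Set.disjoint_left]
        intro ω hω1 hω0
        simp only [Set.mem_setOf_eq] at hω1 hω0
        rw [hω1] at hω0; norm_num at hω0
      have hP0 : ∀ k, ℙ {ω | η k ω = 0} = 1 - ENNReal.ofReal p := by
        intro k
        have h0 : {ω | η k ω = 0} = {ω | η k ω = 1}ᶜ := by
          ext ω
          simp only [Set.mem_setOf_eq, Set.mem_compl_iff]
          rcases hrange k ω with h | h <;> simp [h]
        rw [h0, prob_compl_eq_one_sub (h1meas k), hber]
      intro k s
      rw [key k s, key 0 s,
        measure_union (disj k s)
          (by by_cases hz : (0:ℝ) ∈ s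
              · simpa [hz] using h0meas k
              · simp [hz]),
        measure_union (disj 0 s)
          (by by_cases hz : (0:ℝ) ∈ s
              · simpa [hz] using h0meas 0
              · simp [hz])]
      by_cases h1 : (1:ℝ) ∈ s <;> by_cases hz : (0:ℝ) ∈ s <;>
        simp [h1, hz, hber, hP0]
    intro i
    refine ⟨(hmeas i).aemeasurable, (hmeas 0).aemeasurable, ?_⟩
    ext s hs
    rw [Measure.map_apply (hmeas i) hs, Measure.map_apply (hmeas 0) hs, law i s]
  -- integrability and moments of η
  have habs : ∀ k ω, |η k ω| ≤ 1 := by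
    intro k ω; rcases hrange k ω with h | h <;> simp [h]
  have hMemTop : ∀ k, MemLp (η k) ⊤ ℙ :=
    fun k => memLp_top_of_bound ((hmeas k).aestronglyMeasurable) 1 (ae_of_all _ (habs k))
  have hMem2 : ∀ k, MemLp (η k) 2 ℙ := fun k => (hMemTop k).mono_exponent le_top
  have hInt : ∀ k, Integrable (η k) ℙ := fun k =>
    memLp_one_iff_integrable.mp ((hMemTop k).mono_exponent le_top)
  have hend : ∀ k, η k = Set.indicator {ω | η k ω = 1} (fun _ => (1:ℝ)) := by
    intro k; ext ω
    rcases hrange k ω with h | h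
    · rw [h, Set.indicator_of_notMem]; simp [h]
    · rw [h, Set.indicator_of_mem]; exact h
  have hInteg : ∀ k, ∫ ω, η k ω ∂ℙ = p := by
    intro k
    have hs : MeasurableSet {ω | η k ω = 1} := (hmeas k) measurableSet_eq
    calc ∫ ω, η k ω ∂ℙ
        = ∫ ω, ({ω | η k ω = 1}.indicator (fun _ => (1:ℝ))) ω ∂ℙ := by rw [← hend k]
      _ = (ℙ {ω | η k ω = 1}).toReal • (1:ℝ) := integral_indicator_const (1:ℝ) hs
      _ = p := by rw [hber]; simp [ENNReal.toReal_ofReal hp.le]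
  -- centered variables
  set X : ℕ → Ω → ℝ := fun k ω => η k ω - p with hXdef
  have hXmem2 : ∀ k, MemLp (X k) 2 ℙ := fun k => (hMem2 k).sub (memLp_const p)
  have hXint0 : ∀ k, ∫ ω, X k ω ∂ℙ = 0 := by
    intro k
    rw [show (fun ω => X k ω) = (fun ω => η k ω - p) from rfl,
      integral_sub (hInt k) (integrable_const p), hInteg k, integral_const]
    simp
  have hXvar : ∀ k, variance (X k) ℙ ≤ 1 := by
    intro k
    rw [variance_of_integral_eq_zero (hXmem2 k).aemeasurable (hXint0 k)]
    calc ∫ ω, (X k ^ 2) ω ∂ℙ ≤ ∫ _ω, (1:ℝ) ∂ℙ := by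
          apply integral_mono ((hXmem2 k).integrable_sq) (integrable_const 1)
          intro ω
          simp only [Pi.pow_apply]
          have := habs k ω
          have h2 : |X k ω| ≤ 1 := by
            simp only [hXdef]
            rcases hrange k ω with h | h <;> rw [h] <;> rw [abs_le] <;> constructor <;> linarith
          nlinarith [abs_nonneg (X k ω), sq_abs (X k ω)]
      _ = 1 := by simp
  have hXindep : ∀ i j, i ≠ j → IndepFun (X i) (X j) ℙ := by
    intro i j hij
    exact (hindep.indepFun hij).comp (measurable_id.sub_const p) (measurable_id.sub_const p)
  -- second moment of the centered partial sums
  have hTX : ∀ k ω, ∑ l ∈ Finset.Icc 1 k, X l ω = T k ω - p * k := by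
    intro k ω
    simp only [hXdef, hTdef, Finset.sum_sub_distrib, Finset.sum_const,
      Nat.card_Icc, smul_eq_mul]
    ring_nf
    simp [mul_comm]
  have hTXfun : ∀ k, (∑ l ∈ Finset.Icc 1 k, X l) = fun ω => T k ω - p * k := by
    intro k; ext ω; rw [Finset.sum_apply]; exact hTX k ω
  have hSmem2 : ∀ k, MemLp (fun ω => T k ω - p * k) 2 ℙ := by
    intro k; rw [← hTXfun k]; exact memLp_finsetSum' _ (fun i _ => hXmem2 i)
  have hmoment : ∀ k, ∫ ω, (T k ω - p * k)^2 ∂ℙ ≤ k := by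
    intro k
    have hint0 : ∫ ω, (T k ω - p * k) ∂ℙ = 0 := by
      simp only [← hTX]
      rw [integral_finset_sum _ (fun i _ => memLp_one_iff_integrable.mp
        ((hXmem2 i).mono_exponent (by norm_num)))]
      simp [hXint0]
    have hv := variance_of_integral_eq_zero (hSmem2 k).aemeasurable hint0
    have hvs : variance (fun ω => T k ω - p * k) ℙ ≤ k := by
      rw [← hTXfun k, IndepFun.variance_sum (fun i _ => hXmem2 i)
        (fun i _ j _ hij => hXindep i j hij)]
      calc ∑ i ∈ Finset.Icc 1 k, variance (X i) ℙ ≤ ∑ _i ∈ Finset.Icc 1 k, (1:ℝ) :=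
            Finset.sum_le_sum (fun i _ => hXvar i)
        _ = k := by simp
    calc ∫ ω, (T k ω - p * k)^2 ∂ℙ = variance (fun ω => T k ω - p * k) ℙ := by
          rw [hv]
      _ ≤ k := hvs
  -- summable majorants
  set u : ℕ → ℝ := fun k => (((k:ℝ)^2) * Real.sqrt k)⁻¹ with hudef
  set v : ℕ → ℝ := fun k => ((k:ℝ) * Real.sqrt k)⁻¹ with hvdef
  have hvnonneg : ∀ k, 0 ≤ v k := by intro k; rw [hvdef]; positivity
  have hv : Summable v := by
    have he : ∀ k : ℕ, v k = 1 / (k:ℝ) ^ (3/2 : ℝ) := by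
      intro k
      rcases Nat.eq_zero_or_pos k with h | h
      · subst h; simp [hvdef, Real.zero_rpow (by norm_num : (3/2:ℝ) ≠ 0)]
      · have hk0 : (0:ℝ) < k := by exact_mod_cast h
        rw [hvdef, one_div, show (3/2 : ℝ) = 1 + 1/2 by norm_num, Real.rpow_add hk0,
          Real.rpow_one, ← Real.sqrt_eq_rpow]
    exact (summable_congr he).mpr (Real.summable_one_div_nat_rpow.mpr (by norm_num))
  have huv : ∀ k : ℕ, (k:ℝ) * u k ≤ v k := by
    intro k
    rcases Nat.eq_zero_or_pos k with h | h
    · subst h; simp [hudef, hvdef]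
    · have hk0 : (0:ℝ) < k := by exact_mod_cast h
      have hs0 : 0 < Real.sqrt k := Real.sqrt_pos.mpr hk0
      apply le_of_eq
      rw [hudef, hvdef]
      field_simp
  set f : ℕ → Ω → ℝ := fun k ω => (T k ω - p * k)^2 * u k with hfdef
  have hfmeas : ∀ k, Measurable (f k) := fun k =>
    (((hTmeas k).sub_const _).pow_const 2).mul_const _
  have hfnonneg : ∀ k ω, 0 ≤ f k ω := by
    intro k ω
    apply mul_nonneg (sq_nonneg _)
    rw [hudef]; positivity
  have hfint : ∀ k, Integrable (f k) ℙ := fun k => ((hSmem2 k).integrable_sq).mul_const _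
  have hfibound : ∀ k, ∫ ω, f k ω ∂ℙ ≤ v k := by
    intro k
    have hu0 : 0 ≤ u k := by rw [hudef]; positivity
    calc ∫ ω, f k ω ∂ℙ = (∫ ω, (T k ω - p*k)^2 ∂ℙ) * u k := integral_mul_const _ _
      _ ≤ (k:ℝ) * u k := mul_le_mul_of_nonneg_right (hmoment k) hu0
      _ ≤ v k := huv k
  -- Tonelli: a.s. summability of f
  have htonelli : ∀ᵐ ω ∂ℙ, Summable (fun k => f k ω) := by
    have hlt : ∫⁻ ω, ∑' k, ENNReal.ofReal (f k ω) ∂ℙ < ⊤ := by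
      rw [lintegral_tsum (fun k => ((hfmeas k).ennreal_ofReal).aemeasurable)]
      calc ∑' k, ∫⁻ ω, ENNReal.ofReal (f k ω) ∂ℙ
          = ∑' k, ENNReal.ofReal (∫ ω, f k ω ∂ℙ) := by
            refine tsum_congr (fun k => ?_)
            exact (ofReal_integral_eq_lintegral_ofReal (hfint k)
              (ae_of_all _ (hfnonneg k))).symm
        _ ≤ ∑' k, ENNReal.ofReal (v k) :=
            ENNReal.tsum_le_tsum (fun k => ENNReal.ofReal_le_ofReal (hfibound k))
        _ = ENNReal.ofReal (∑' k, v k) := (ENNReal.ofReal_tsum_of_nonneg hvnonneg hv).symm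
        _ < ⊤ := ENNReal.ofReal_lt_top
    have hmeas' : Measurable fun ω => ∑' k, ENNReal.ofReal (f k ω) :=
      Measurable.ennreal_tsum (fun k => (hfmeas k).ennreal_ofReal)
    filter_upwards [ae_lt_top hmeas' hlt.ne] with ω hω
    have hsum := ENNReal.summable_toReal hω.ne
    have he : ∀ k, (ENNReal.ofReal (f k ω)).toReal = f k ω :=
      fun k => ENNReal.toReal_ofReal (hfnonneg k ω)
    exact (summable_congr he).mp hsum
  -- strong law
  have hSL := strong_law_ae_real η (hInt 0) (fun i j hij => hindep.indepFun hij) hident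
  rw [hInteg 0] at hSL
  filter_upwards [hSL, htonelli] with ω hω1 hω2
  -- eventual lower bound on T
  have hgood : ∀ᶠ k : ℕ in atTop, p * k / 2 ≤ T k ω ∧ 1 ≤ k := by
    have h34 : ∀ᶠ n : ℕ in atTop, 3*p/4 ≤ (∑ i ∈ Finset.range n, η i ω)/n :=
      hω1.eventually (eventually_ge_nhds (by linarith))
    rw [eventually_atTop] at h34 ⊢
    obtain ⟨N, hN⟩ := h34
    refine ⟨max N (Nat.ceil (4/p) + 1), fun k hk => ?_⟩
    have hk1 : Nat.ceil (4/p) + 1 ≤ k := le_trans (le_max_right _ _) hk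
    have hK4 : (4:ℝ)/p ≤ k := by
      calc (4:ℝ)/p ≤ (Nat.ceil (4/p) : ℝ) := Nat.le_ceil _
        _ ≤ k := by exact_mod_cast Nat.le_of_succ_le hk1
    have hpk4 : 4 ≤ p * k := by
      rw [div_le_iff₀ hp] at hK4; linarith [hK4]
    have hsum34 := hN (k+1) (by omega)
    have hk1' : (0:ℝ) < (k:ℝ)+1 := by positivity
    have hx : (3*p/4) * ((k:ℝ)+1) ≤ ∑ i ∈ Finset.range (k+1), η i ω := by
      rw [le_div_iff₀ (by exact_mod_cast hk1' : (0:ℝ) < ((k+1 : ℕ):ℝ))] at hsum34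
      calc (3*p/4) * ((k:ℝ)+1) = 3*p/4 * ((k+1 : ℕ):ℝ) := by push_cast; ring
        _ ≤ _ := hsum34
    have hsplit : ∑ i ∈ Finset.range (k+1), η i ω = η 0 ω + T k ω := by
      have hins : Finset.range (k+1) = insert 0 (Finset.Icc 1 k) := by
        ext x; simp only [Finset.mem_range, Finset.mem_insert, Finset.mem_Icc]; omega
      rw [hins, Finset.sum_insert (by simp)]
    have hη0 : η 0 ω ≤ 1 := by rcases hrange 0 ω with h|h <;> simp [h]
    refine ⟨?_, by omega⟩
    nlinarith [hx, hsplit, hη0, hpk4]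
  -- the summable majorant B
  set B : ℕ → ℝ := fun k => (1/p^2) * (f k ω + v k) + (6/p^2) * (((k:ℝ)^2)⁻¹) with hBdef
  have hBsum : Summable B := by
    apply Summable.add
    · exact (hω2.add hv).mul_left _
    · apply Summable.mul_left
      have := Real.summable_one_div_nat_pow.mpr (by norm_num : 1 < 2)
      simpa [one_div] using this
  have hbound : ∀ k : ℕ, p * k / 2 ≤ T k ω → 1 ≤ k →
      |1 / ((2 + T k ω) + 1) - 1 / (p * ((k:ℝ) + 1))| ≤ B k := by
    intro k h1 h2
    have h := stmt_4_aux p (T k ω) k hp hp1 h2 h1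
    simpa [hBdef, hfdef, hudef, hvdef] using h
  rw [eventually_atTop] at hgood
  obtain ⟨N, hN⟩ := hgood
  have hfin : Summable (fun k : ℕ => |1 / ((2 + T (k + N) ω) + 1) - 1 / (p * (((k:ℕ) + N : ℕ) + 1 : ℝ))|) := by
    apply Summable.of_nonneg_of_le (fun k => abs_nonneg _)
      (fun k => hbound (k+N) (hN (k+N) (Nat.le_add_left N k)).1 (hN (k+N) (Nat.le_add_left N k)).2)
      ((summable_nat_add_iff N).mpr hBsum)
  exact (summable_nat_add_iff N).mp hfin
end

section
/- Let $\{\bar\xi_i\}$ be i.i.d. centered random variables with finite variance, $\bar{S}_k = \sum_{l=1}^k \bar\xi_l$, and fix $\zeta > 1$ and $\epsilon > 0$. Then almost surely $\sum_{j=1}^{i} \bar\xi_j \frac{j^{\zeta-1}}{i^{\zeta}} = o(i^{-(1/2-\epsilon)})$ as $i \to \infty$; i.e., $i^{1/2-\epsilon}\left|\frac{1}{i^\zeta}\sum_{j=1}^i j^{\zeta-1}\bar\xi_j\right| \to 0$ a.s. -/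
open MeasureTheory ProbabilityTheory Filter Topology Finset
open scoped ENNReal NNReal



lemma abel_identity (β : ℝ) (x : ℕ → ℝ) (n : ℕ) :
    ∑ j ∈ Finset.Icc 1 n, (j : ℝ) ^ β * x j =
      (n : ℝ) ^ β * (∑ j ∈ Finset.Icc 1 n, x j) -
      ∑ j ∈ Finset.range n, (((j + 1 : ℕ) : ℝ) ^ β - (j : ℝ) ^ β) *
        (∑ k ∈ Finset.Icc 1 j, x k) := by
  induction n with
  | zero => simp
  | succ n ih =>
    rw [Finset.sum_Icc_succ_top (Nat.one_le_iff_ne_zero.2 (Nat.succ_ne_zero n)),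
      Finset.sum_Icc_succ_top (Nat.one_le_iff_ne_zero.2 (Nat.succ_ne_zero n)),
      Finset.sum_range_succ, ih]
    push_cast
    ring

lemma kron {β : ℝ} (hβ : 0 < β) (x : ℕ → ℝ) (L : ℝ)
    (hx : Tendsto (fun n => ∑ j ∈ Finset.Icc 1 n, x j) atTop (𝓝 L)) :
    Tendsto (fun n : ℕ => (∑ j ∈ Finset.Icc 1 n, (j : ℝ) ^ β * x j) / (n : ℝ) ^ β)
      atTop (𝓝 0) := by
  set T : ℕ → ℝ := fun n => ∑ j ∈ Finset.Icc 1 n, x j with hT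
  set w : ℕ → ℝ := fun j => ((j + 1 : ℕ) : ℝ) ^ β - (j : ℝ) ^ β with hw
  have hw_nonneg : ∀ j, 0 ≤ w j := by
    intro j
    have : ((j : ℝ)) ^ β ≤ ((j + 1 : ℕ) : ℝ) ^ β := by
      apply Real.rpow_le_rpow (Nat.cast_nonneg _) (by push_cast; linarith) hβ.le
    simpa [hw] using sub_nonneg.2 this
  have hw_sum : ∀ n, ∑ j ∈ Finset.range n, w j = (n : ℝ) ^ β := by
    intro n
    rw [hw]
    rw [Finset.sum_range_sub (fun k => ((k : ℕ) : ℝ) ^ β)]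
    simp [Real.zero_rpow hβ.ne']
  -- sum of w tends to infinity
  have hw_top : Tendsto (fun n => ∑ j ∈ Finset.range n, w j) atTop atTop := by
    simp only [hw_sum]
    exact (tendsto_rpow_atTop hβ).comp tendsto_natCast_atTop_atTop
  set u : ℕ → ℝ := fun j => T j - L with hu
  have hu0 : Tendsto u atTop (𝓝 0) := by
    simpa [hu] using hx.sub_const L
  have hlittle : (fun j => w j * u j) =o[atTop] w := by
    have h1 : (fun j => u j * w j) =o[atTop] (fun j => (1 : ℝ) * w j) :=
      ((Asymptotics.isLittleO_one_iff ℝ).2 hu0).mul_isBigO (Asymptotics.isBigO_refl w atTop)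
    refine (h1.congr ?_ ?_) <;> intro j <;> ring
  have hsum_little : (fun n => ∑ j ∈ Finset.range n, w j * u j) =o[atTop]
      (fun n : ℕ => (n : ℝ) ^ β) := by
    have := hlittle.sum_range hw_nonneg hw_top
    refine this.congr (fun n => rfl) (fun n => ?_)
    rw [hw_sum]
  have hdiv : Tendsto (fun n : ℕ => (∑ j ∈ Finset.range n, w j * u j) / (n : ℝ) ^ β)
      atTop (𝓝 0) := hsum_little.tendsto_div_nhds_zero
  -- main computation
  have key : ∀ᶠ n : ℕ in atTop,
      (∑ j ∈ Finset.Icc 1 n, (j : ℝ) ^ β * x j) / (n : ℝ) ^ β =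
      u n - (∑ j ∈ Finset.range n, w j * u j) / (n : ℝ) ^ β := by
    filter_upwards [Filter.eventually_ge_atTop 1] with n hn
    have hnpos : (0 : ℝ) < (n : ℝ) ^ β :=
      Real.rpow_pos_of_pos (by exact_mod_cast Nat.lt_of_lt_of_le Nat.zero_lt_one hn) β
    have hwT : ∑ j ∈ Finset.range n, w j * T j
        = L * (n : ℝ) ^ β + ∑ j ∈ Finset.range n, w j * u j := by
      have : ∀ j, w j * T j = w j * L + w j * u j := by
        intro j; simp only [hu]; ring
      rw [Finset.sum_congr rfl (fun j _ => this j), Finset.sum_add_distrib,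
        ← Finset.sum_mul, hw_sum]
      ring
    rw [abel_identity β x n]
    have : ∀ j, (((j + 1 : ℕ) : ℝ) ^ β - (j : ℝ) ^ β) * (∑ k ∈ Finset.Icc 1 j, x k)
        = w j * T j := fun j => rfl
    rw [Finset.sum_congr rfl (fun j _ => this j), hwT]
    field_simp
    ring_nf
    rw [hu]
    ring
  exact Tendsto.congr' (Filter.EventuallyEq.symm key) (by simpa using hu0.sub hdiv)


set_option maxHeartbeats 1000000 in
lemma conv_aux {Ω : Type*} [MeasureSpace Ω] [IsProbabilityMeasure (ℙ : Measure Ω)]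
    (ξ : ℕ → Ω → ℝ)
    (hmeas : ∀ i, Measurable (ξ i))
    (hindep : iIndepFun ξ ℙ)
    (hident : ∀ i, IdentDistrib (ξ i) (ξ 1) ℙ ℙ)
    (hmean : ∀ i, ∫ ω, ξ i ω ∂ℙ = 0)
    (hL2 : Integrable (fun ω => (ξ 1 ω) ^ 2) ℙ)
    (α : ℝ) (hα : 1 / 2 < α) :
    ∀ᵐ ω ∂ℙ, ∃ c, Tendsto (fun n : ℕ => ∑ j ∈ Finset.Icc 1 n, (j : ℝ) ^ (-α) * ξ j ω)
      atTop (𝓝 c) := by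
  have h1 : MemLp (ξ 1) 2 ℙ :=
    (memLp_two_iff_integrable_sq (hmeas 1).aestronglyMeasurable).2 hL2
  have hm2 : ∀ j, MemLp (ξ j) 2 ℙ := fun j => (hident j).symm.memLp_snd h1
  have hm1 : ∀ j, Integrable (ξ j) ℙ := fun j => (hm2 j).integrable one_le_two
  set c : ℕ → ℝ := fun j => (j : ℝ) ^ (-α) with hc
  set M : ℕ → Ω → ℝ := fun n ω => ∑ j ∈ Finset.Icc 1 n, c j * ξ j ω with hM
  set ℱ := MeasureTheory.Filtration.natural ξ (fun i => (hmeas i).stronglyMeasurable) with hℱ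
  have hfun : ∀ n, M n = ∑ j ∈ Finset.Icc 1 n, (fun ω => c j * ξ j ω) := by
    intro n
    funext ω
    rw [Finset.sum_apply]
  have hMmem : ∀ n, MemLp (M n) 2 ℙ := by
    intro n
    rw [hfun n]
    exact memLp_finsetSum' _ (fun j _ => (hm2 j).const_mul (c j))
  have hint : ∀ n, Integrable (M n) ℙ := fun n => (hMmem n).integrable one_le_two
  have hmeasF : ∀ j n, j ≤ n → Measurable[ℱ n] (ξ j) := by
    intro j n hjn
    have : MeasurableSpace.comap (ξ j) inferInstance ≤ ℱ n :=
      le_iSup₂ (f := fun k (_ : k ≤ n) => MeasurableSpace.comap (ξ k) inferInstance) j hjn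
    exact measurable_iff_comap_le.2 this
  have hadp : StronglyAdapted ℱ M := by
    intro n
    apply Finset.stronglyMeasurable_fun_sum
    intro j hj
    have hjn : j ≤ n := (Finset.mem_Icc.1 hj).2
    exact (((hmeasF j n hjn).const_mul (c j))).stronglyMeasurable
  -- martingale property
  have hmart : Martingale M ℱ ℙ := by
    apply martingale_nat hadp hint
    intro i
    have hsplit : M (i + 1) = M i + fun ω => c (i + 1) * ξ (i + 1) ω := by
      funext ω
      show ∑ j ∈ Finset.Icc 1 (i + 1), c j * ξ j ω
        = (∑ j ∈ Finset.Icc 1 i, c j * ξ j ω) + c (i + 1) * ξ (i + 1) ω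
      exact Finset.sum_Icc_succ_top (Nat.succ_le_succ (Nat.zero_le i)) _
    have hgint : Integrable (fun ω => c (i + 1) * ξ (i + 1) ω) ℙ :=
      (hm1 (i + 1)).const_mul _
    have hindep' : Indep (MeasurableSpace.comap (ξ (i + 1)) inferInstance) (ℱ i) ℙ := by
      have hdisj : Disjoint ({i + 1} : Set ℕ) (Set.Iic i) := by
        simp [Set.disjoint_singleton_left]
      have h := indep_iSup_of_disjoint
        (fun k => measurable_iff_comap_le.1 (hmeas k)) hindep hdisj
      have e1 : (⨆ k ∈ ({i + 1} : Set ℕ), MeasurableSpace.comap (ξ k) inferInstance)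
          = MeasurableSpace.comap (ξ (i + 1)) inferInstance := by
        simp
      have e2 : (⨆ k ∈ Set.Iic i, MeasurableSpace.comap (ξ k) inferInstance) = ℱ i := rfl
      rwa [e1, e2] at h
    have hsm : StronglyMeasurable[MeasurableSpace.comap (ξ (i + 1)) inferInstance]
        (fun ω => c (i + 1) * ξ (i + 1) ω) := by
      have : Measurable[MeasurableSpace.comap (ξ (i + 1)) inferInstance] (ξ (i + 1)) :=
        measurable_iff_comap_le.2 le_rfl
      exact (this.const_mul _).stronglyMeasurable
    have hcond_g : ℙ[(fun ω => c (i + 1) * ξ (i + 1) ω)|ℱ i] =ᵐ[ℙ]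
        fun _ => ∫ ω, c (i + 1) * ξ (i + 1) ω ∂ℙ :=
      condExp_indep_eq (measurable_iff_comap_le.1 (hmeas (i + 1))) (ℱ.le i) hsm hindep'
    have hzero : (∫ ω, c (i + 1) * ξ (i + 1) ω ∂ℙ) = 0 := by
      rw [integral_const_mul, hmean (i + 1), mul_zero]
    have hcondMi : ℙ[M i|ℱ i] = M i :=
      condExp_of_stronglyMeasurable (ℱ.le i) (hadp i) (hint i)
    calc M i = M i + fun _ => (0 : ℝ) := by funext ω; simp
    _ =ᵐ[ℙ] ℙ[M i|ℱ i] + ℙ[(fun ω => c (i + 1) * ξ (i + 1) ω)|ℱ i] := by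
        rw [hcondMi]
        filter_upwards [hcond_g] with ω hω
        simp only [Pi.add_apply, hω, hzero]
    _ =ᵐ[ℙ] ℙ[M (i + 1)|ℱ i] := by
        rw [hsplit]
        exact (condExp_add (hint i) hgint _).symm
  -- L² (hence L¹) bound
  have hsummable : Summable (fun j : ℕ => ((j : ℝ)) ^ (-(2 * α))) :=
    Real.summable_nat_rpow.2 (by linarith)
  have hKnonneg : 0 ≤ ∑' j : ℕ, ((j : ℝ)) ^ (-(2 * α)) :=
    tsum_nonneg (fun j => Real.rpow_nonneg (Nat.cast_nonneg _) _)
  have hVnonneg : 0 ≤ (∑' j : ℕ, ((j : ℝ)) ^ (-(2 * α))) * variance (ξ 1) ℙ :=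
    mul_nonneg hKnonneg (variance_nonneg _ _)
  have hvarM : ∀ n, variance (M n) ℙ ≤ (∑' j : ℕ, ((j : ℝ)) ^ (-(2 * α))) * variance (ξ 1) ℙ := by
    intro n
    have hvs : variance (M n) ℙ = ∑ j ∈ Finset.Icc 1 n, variance (fun ω => c j * ξ j ω) ℙ := by
      rw [hfun n]
      apply IndepFun.variance_sum
      · intro j _; exact (hm2 j).const_mul (c j)
      · intro j _ k _ hjk
        exact ((hindep.indepFun hjk).comp (measurable_const_mul (c j))
          (measurable_const_mul (c k)))
    rw [hvs]
    have heach : ∀ j ∈ Finset.Icc 1 n,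
        variance (fun ω => c j * ξ j ω) ℙ = ((j:ℝ)) ^ (-(2 * α)) * variance (ξ 1) ℙ := by
      intro j hj
      have hjpos : (0 : ℝ) < (j : ℝ) := by
        exact_mod_cast Nat.lt_of_lt_of_le Nat.zero_lt_one (Finset.mem_Icc.1 hj).1
      rw [variance_const_mul, (hident j).variance_eq]
      congr 1
      rw [hc]
      rw [← Real.rpow_natCast ((j:ℝ) ^ (-α)) 2, ← Real.rpow_mul hjpos.le]
      norm_num
      ring_nf
    rw [Finset.sum_congr rfl heach, ← Finset.sum_mul]
    apply mul_le_mul_of_nonneg_right _ (variance_nonneg _ _)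
    exact Summable.sum_le_tsum _ (fun j _ => Real.rpow_nonneg (Nat.cast_nonneg _) _) hsummable
  have hmean0 : ∀ n, (∫ ω, M n ω ∂ℙ) = 0 := by
    intro n
    show (∫ ω, ∑ j ∈ Finset.Icc 1 n, c j * ξ j ω ∂ℙ) = 0
    rw [integral_finset_sum _ (fun j _ => (hm1 j).const_mul (c j))]
    apply Finset.sum_eq_zero
    intro j _
    rw [integral_const_mul, hmean j, mul_zero]
  obtain ⟨R, hbdd⟩ : ∃ R : ℝ≥0, ∀ n, eLpNorm (M n) 1 ℙ ≤ (R : ℝ≥0∞) := by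
    refine ⟨Real.toNNReal
      ((((∑' j : ℕ, ((j : ℝ)) ^ (-(2 * α))) * variance (ξ 1) ℙ)) ^ ((1:ℝ)/2)), fun n => ?_⟩
    have step1 : eLpNorm (M n) 1 ℙ ≤ eLpNorm (M n) 2 ℙ :=
      eLpNorm_le_eLpNorm_of_exponent_le one_le_two (hint n).aestronglyMeasurable
    have step2 : eLpNorm (M n) 2 ℙ = evariance (M n) ℙ ^ ((1:ℝ)/2) := by
      rw [eLpNorm_eq_lintegral_rpow_enorm_toReal two_ne_zero ENNReal.ofNat_ne_top]
      rw [evariance]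
      rw [hmean0 n]
      simp only [sub_zero, ENNReal.toReal_ofNat, one_div]
      congr 1
      apply lintegral_congr
      intro ω
      rw [← ENNReal.rpow_two]
    have step3 : evariance (M n) ℙ = ENNReal.ofReal (variance (M n) ℙ) :=
      ((hMmem n).ofReal_variance_eq).symm
    calc eLpNorm (M n) 1 ℙ ≤ eLpNorm (M n) 2 ℙ := step1
    _ = evariance (M n) ℙ ^ ((1:ℝ)/2) := step2
    _ ≤ (ENNReal.ofReal ((∑' j : ℕ, ((j : ℝ)) ^ (-(2 * α))) * variance (ξ 1) ℙ)) ^ ((1:ℝ)/2) := by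
        rw [step3]
        exact ENNReal.rpow_le_rpow (ENNReal.ofReal_le_ofReal (hvarM n)) (by norm_num)
    _ = _ := by
        rw [show ((Real.toNNReal
            ((((∑' j : ℕ, ((j : ℝ)) ^ (-(2 * α))) * variance (ξ 1) ℙ)) ^ ((1:ℝ)/2)) : ℝ≥0∞))
          = ENNReal.ofReal
            ((((∑' j : ℕ, ((j : ℝ)) ^ (-(2 * α))) * variance (ξ 1) ℙ)) ^ ((1:ℝ)/2)) from rfl,
          ENNReal.ofReal_rpow_of_nonneg hVnonneg (by norm_num)]
  exact hmart.submartingale.exists_ae_tendsto_of_bdd hbdd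


theorem stmt_11 {Ω : Type*} [MeasureSpace Ω] [IsProbabilityMeasure (ℙ : Measure Ω)]
    (ξ : ℕ → Ω → ℝ)
    (hmeas : ∀ i, Measurable (ξ i))
    (hindep : iIndepFun ξ ℙ)
    (hident : ∀ i, IdentDistrib (ξ i) (ξ 1) ℙ ℙ)
    (hmean : ∀ i, ∫ ω, ξ i ω ∂ℙ = 0)
    (hL2 : Integrable (fun ω => (ξ 1 ω) ^ 2) ℙ)
    (ζ : ℝ) (hζ : 1 < ζ) (ε : ℝ) (hε : 0 < ε) :
    ∀ᵐ ω ∂ℙ, Tendsto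
      (fun i : ℕ => (i : ℝ) ^ ((1 : ℝ) / 2 - ε) *
        |(1 / (i : ℝ) ^ ζ) * ∑ j ∈ Finset.Icc 1 i, (j : ℝ) ^ (ζ - 1) * ξ j ω|)
      atTop (𝓝 0) := by
  have hα : (1:ℝ)/2 < 1/2 + ε/2 := by linarith
  have hβpos : (0:ℝ) < ζ - 1 + (1/2 + ε/2) := by linarith
  filter_upwards [conv_aux ξ hmeas hindep hident hmean hL2 (1/2 + ε/2) hα] with ω hω
  obtain ⟨L, hL⟩ := hω
  set x : ℕ → ℝ := fun j => (j : ℝ) ^ (-(1/2 + ε/2)) * ξ j ω with hx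
  set β : ℝ := ζ - 1 + (1/2 + ε/2) with hβ
  set D : ℕ → ℝ := fun n => (∑ j ∈ Finset.Icc 1 n, (j : ℝ) ^ β * x j) / (n : ℝ) ^ β with hD
  have hDto : Tendsto D atTop (𝓝 0) := kron hβpos x L hL
  have habs0 : Tendsto (fun n => |D n|) atTop (𝓝 0) := by simpa using hDto.abs
  refine squeeze_zero_norm' ?_ habs0
  · filter_upwards [Filter.eventually_ge_atTop 1] with i hi
    have hipos : (0:ℝ) < (i : ℝ) := by exact_mod_cast Nat.lt_of_lt_of_le Nat.zero_lt_one hi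
    have hiβ : (0:ℝ) < (i : ℝ) ^ β := Real.rpow_pos_of_pos hipos β
    have hiζ : (0:ℝ) < (i : ℝ) ^ ζ := Real.rpow_pos_of_pos hipos ζ
    have hS : ∑ j ∈ Finset.Icc 1 i, (j : ℝ) ^ (ζ - 1) * ξ j ω
        = ∑ j ∈ Finset.Icc 1 i, (j : ℝ) ^ β * x j := by
      refine Finset.sum_congr rfl fun j hj => ?_
      have hjpos : (0:ℝ) < (j : ℝ) := by
        exact_mod_cast Nat.lt_of_lt_of_le Nat.zero_lt_one (Finset.mem_Icc.1 hj).1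
      rw [hx]
      rw [← mul_assoc, ← Real.rpow_add hjpos]
      congr 2
      rw [hβ]; ring
    have habs : |∑ j ∈ Finset.Icc 1 i, (j : ℝ) ^ β * x j| = |D i| * (i : ℝ) ^ β := by
      rw [hD]
      simp only []
      rw [abs_div, abs_of_nonneg hiβ.le, div_mul_cancel₀ _ hiβ.ne']
    have hcoef : (i : ℝ) ^ ((1:ℝ)/2 - ε) * (1 / (i : ℝ) ^ ζ) * (i : ℝ) ^ β ≤ 1 := by
      rw [one_div ((i:ℝ) ^ ζ), ← Real.rpow_neg hipos.le, ← Real.rpow_add hipos, ← Real.rpow_add hipos]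
      have he : (1:ℝ)/2 - ε + -ζ + β = -(ε/2) := by rw [hβ]; ring
      rw [he]
      exact Real.rpow_le_one_of_one_le_of_nonpos (by exact_mod_cast hi) (by linarith)
    have hnonneg : 0 ≤ (i : ℝ) ^ ((1:ℝ)/2 - ε) *
        |(1 / (i : ℝ) ^ ζ) * ∑ j ∈ Finset.Icc 1 i, (j : ℝ) ^ (ζ - 1) * ξ j ω| := by
      positivity
    rw [Real.norm_of_nonneg hnonneg]
    calc (i : ℝ) ^ ((1:ℝ)/2 - ε) *
        |(1 / (i : ℝ) ^ ζ) * ∑ j ∈ Finset.Icc 1 i, (j : ℝ) ^ (ζ - 1) * ξ j ω|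
        = ((i : ℝ) ^ ((1:ℝ)/2 - ε) * (1 / (i : ℝ) ^ ζ) * (i : ℝ) ^ β) * |D i| := by
          rw [hS, abs_mul, abs_of_nonneg (by positivity : (0:ℝ) ≤ 1 / (i : ℝ) ^ ζ), habs]
          ring
      _ ≤ 1 * |D i| := by
          apply mul_le_mul_of_nonneg_right hcoef (abs_nonneg _)
      _ = |D i| := one_mul _
end
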